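/- Let K(s,p), B(s,p), C(s,p) be as in the parametric interpolation setting, with the tangential conditions K(σ,π)⁻¹B(σ,π)r ∈ Ran(V) and (ℓᵀC(σ,π)K(σ,π)⁻¹)ᵀ ∈ Ran(W). Then the value and s-derivative both match: ℓᵀH(σ,π)r = ℓᵀH_r(σ,π)r and ℓᵀ∂_sH(σ,π)r = ℓᵀ∂_sH_r(σ,π)r, where H(s,p) = C(s,p)K(s,p)⁻¹B(s,p) and H_r(s,p) = C(s,p)V(WᵀK(s,p)V)⁻¹WᵀB(s,p). -/

import Mathlib

open Matrix
open scoped Matrix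

section Aux

variable {N M P : ℕ} {σ : ℂ}

lemma diffAt_det {A : ℂ → Matrix (Fin N) (Fin N) ℂ}
    (hA : ∀ i j, DifferentiableAt ℂ (fun s => A s i j) σ) :
    DifferentiableAt ℂ (fun s => (A s).det) σ := by
  simp only [Matrix.det_apply']
  exact DifferentiableAt.fun_sum fun τ _ =>
    (DifferentiableAt.fun_finsetProd (fun i _ => hA (τ i) i)).const_mul _

lemma diffAt_inv_entry {A : ℂ → Matrix (Fin N) (Fin N) ℂ}
    (hA : ∀ i j, DifferentiableAt ℂ (fun s => A s i j) σ)
    (hdet : (A σ).det ≠ 0) (i j : Fin N) :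
    DifferentiableAt ℂ (fun s => (A s)⁻¹ i j) σ := by
  have hadj : DifferentiableAt ℂ (fun s => (A s).adjugate i j) σ := by
    simp only [Matrix.adjugate_apply]
    refine diffAt_det fun a b => ?_
    simp only [Matrix.updateRow_apply]
    by_cases h : a = j
    · simp only [h, if_pos rfl]; exact differentiableAt_const _
    · simp only [if_neg h]; exact hA a b
  have : (fun s => (A s)⁻¹ i j) = fun s => ((A s).det)⁻¹ * (A s).adjugate i j := by
    funext s
    simp [Matrix.inv_def, Ring.inverse_eq_inv']
  rw [this]
  exact ((diffAt_det hA).inv hdet).mul hadj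

lemma diffAt_mul_entry {A : ℂ → Matrix (Fin N) (Fin M) ℂ} {B : ℂ → Matrix (Fin M) (Fin P) ℂ}
    (hA : ∀ i j, DifferentiableAt ℂ (fun s => A s i j) σ)
    (hB : ∀ i j, DifferentiableAt ℂ (fun s => B s i j) σ)
    (i : Fin N) (j : Fin P) :
    DifferentiableAt ℂ (fun s => (A s * B s) i j) σ := by
  simp only [Matrix.mul_apply]
  exact DifferentiableAt.fun_sum fun k _ => (hA i k).mul (hB k j)

lemma diffAt_scalar {A : ℂ → Matrix (Fin P) (Fin M) ℂ}
    (hA : ∀ i j, DifferentiableAt ℂ (fun s => A s i j) σ)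
    (l : Fin P → ℂ) (r : Fin M → ℂ) :
    DifferentiableAt ℂ (fun s => l ⬝ᵥ (A s *ᵥ r)) σ := by
  simp only [dotProduct, Matrix.mulVec]
  exact DifferentiableAt.fun_sum fun i _ =>
    ((DifferentiableAt.fun_sum fun j _ => (hA i j).mul (differentiableAt_const _))).const_mul _

end Aux

theorem parametric_value_and_frequency_derivative_matching
    {n m p r v : ℕ}
    (K : ℂ → (Fin v → ℝ) → Matrix (Fin n) (Fin n) ℂ)
    (B : ℂ → (Fin v → ℝ) → Matrix (Fin n) (Fin m) ℂ)
    (C : ℂ → (Fin v → ℝ) → Matrix (Fin p) (Fin n) ℂ)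
    (V W : Matrix (Fin n) (Fin r) ℂ)
    (σ : ℂ) (π : Fin v → ℝ)
    (hKdiff : ∀ (a b : Fin n), DifferentiableAt ℂ (fun s : ℂ => K s π a b) σ)
    (hBdiff : ∀ (a : Fin n) (b : Fin m), DifferentiableAt ℂ (fun s : ℂ => B s π a b) σ)
    (hCdiff : ∀ (a : Fin p) (b : Fin n), DifferentiableAt ℂ (fun s : ℂ => C s π a b) σ)
    (hK : IsUnit (K σ π).det)
    (hKr : IsUnit (Wᵀ * K σ π * V).det)
    (rdir : Fin m → ℂ) (hrdir : rdir ≠ 0)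
    (ldir : Fin p → ℂ) (hldir : ldir ≠ 0)
    (hranV : ∃ c : Fin r → ℂ, V *ᵥ c = (K σ π)⁻¹ *ᵥ (B σ π *ᵥ rdir))
    (hranW : ∃ c : Fin r → ℂ, W *ᵥ c = (C σ π * (K σ π)⁻¹)ᵀ *ᵥ ldir) :
    ldir ⬝ᵥ ((C σ π * (K σ π)⁻¹ * B σ π) *ᵥ rdir)
      = ldir ⬝ᵥ (((C σ π * V) * (Wᵀ * K σ π * V)⁻¹ * (Wᵀ * B σ π)) *ᵥ rdir) ∧
    deriv (fun s : ℂ =>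
        ldir ⬝ᵥ ((C s π * (K s π)⁻¹ * B s π) *ᵥ rdir)) σ
      = deriv (fun s : ℂ =>
          ldir ⬝ᵥ (((C s π * V) * (Wᵀ * K s π * V)⁻¹ * (Wᵀ * B s π)) *ᵥ rdir)) σ := by
  obtain ⟨c, hc⟩ := hranV
  obtain ⟨d, hd⟩ := hranW
  have hKdet : (K σ π).det ≠ 0 := isUnit_iff_ne_zero.mp hK
  have hMdet : (Wᵀ * K σ π * V).det ≠ 0 := isUnit_iff_ne_zero.mp hKr
  have hconst : ∀ {a b : ℕ} (X : Matrix (Fin a) (Fin b) ℂ) (i : Fin a) (j : Fin b),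
      DifferentiableAt ℂ (fun _ : ℂ => X i j) σ := fun X i j => differentiableAt_const _
  -- differentiability of entries
  have hKinv : ∀ i j, DifferentiableAt ℂ (fun s => (K s π)⁻¹ i j) σ :=
    diffAt_inv_entry hKdiff hKdet
  have hMe : ∀ i j, DifferentiableAt ℂ (fun s => (Wᵀ * K s π * V) i j) σ :=
    diffAt_mul_entry (diffAt_mul_entry (hconst Wᵀ) hKdiff) (hconst V)
  have hMinv : ∀ i j, DifferentiableAt ℂ (fun s => (Wᵀ * K s π * V)⁻¹ i j) σ :=
    diffAt_inv_entry hMe hMdet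
  -- basic algebra at σ
  have hBr : K σ π *ᵥ (V *ᵥ c) = B σ π *ᵥ rdir := by
    rw [hc, Matrix.mulVec_mulVec, Matrix.mul_nonsing_inv _ hK, Matrix.one_mulVec]
  have hMc : (Wᵀ * K σ π * V) *ᵥ c = (Wᵀ * B σ π) *ᵥ rdir := by
    calc (Wᵀ * K σ π * V) *ᵥ c = Wᵀ *ᵥ (K σ π *ᵥ (V *ᵥ c)) := by
          rw [Matrix.mulVec_mulVec, Matrix.mulVec_mulVec, Matrix.mul_assoc]
      _ = Wᵀ *ᵥ (B σ π *ᵥ rdir) := by rw [hBr]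
      _ = (Wᵀ * B σ π) *ᵥ rdir := by rw [Matrix.mulVec_mulVec]
  have hcval : (Wᵀ * K σ π * V)⁻¹ *ᵥ ((Wᵀ * B σ π) *ᵥ rdir) = c := by
    rw [← hMc, Matrix.mulVec_mulVec, Matrix.nonsing_inv_mul _ hKr, Matrix.one_mulVec]
  have value : ldir ⬝ᵥ ((C σ π * (K σ π)⁻¹ * B σ π) *ᵥ rdir)
      = ldir ⬝ᵥ (((C σ π * V) * (Wᵀ * K σ π * V)⁻¹ * (Wᵀ * B σ π)) *ᵥ rdir) := by
    calc ldir ⬝ᵥ ((C σ π * (K σ π)⁻¹ * B σ π) *ᵥ rdir)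
        = ldir ⬝ᵥ (C σ π *ᵥ ((K σ π)⁻¹ *ᵥ (B σ π *ᵥ rdir))) := by
          rw [Matrix.mulVec_mulVec, Matrix.mulVec_mulVec, Matrix.mul_assoc]
      _ = ldir ⬝ᵥ ((C σ π * V) *ᵥ c) := by rw [← hc, Matrix.mulVec_mulVec]
      _ = ldir ⬝ᵥ ((C σ π * V) *ᵥ ((Wᵀ * K σ π * V)⁻¹ *ᵥ ((Wᵀ * B σ π) *ᵥ rdir))) := by
          rw [hcval]
      _ = ldir ⬝ᵥ (((C σ π * V) * (Wᵀ * K σ π * V)⁻¹ * (Wᵀ * B σ π)) *ᵥ rdir) := by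
          rw [Matrix.mulVec_mulVec, Matrix.mulVec_mulVec, ← Matrix.mul_assoc]
  refine ⟨value, ?_⟩
  -- left tangential facts
  have hld : ldir ᵥ* (C σ π * (K σ π)⁻¹) = d ᵥ* Wᵀ := by
    rw [← Matrix.mulVec_transpose, ← hd, Matrix.vecMul_transpose]
  have hldCV : ldir ᵥ* (C σ π * V) = d ᵥ* (Wᵀ * K σ π * V) := by
    have h1 : C σ π * (K σ π)⁻¹ * (K σ π * V) = C σ π * V := by
      rw [← Matrix.mul_assoc, Matrix.nonsing_inv_mul_cancel_right _ _ hK]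
    calc ldir ᵥ* (C σ π * V) = ldir ᵥ* (C σ π * (K σ π)⁻¹) ᵥ* (K σ π * V) := by
          rw [Matrix.vecMul_vecMul, h1]
      _ = d ᵥ* Wᵀ ᵥ* (K σ π * V) := by rw [hld]
      _ = d ᵥ* (Wᵀ * K σ π * V) := by rw [Matrix.vecMul_vecMul, Matrix.mul_assoc]
  have hldM : ldir ᵥ* (C σ π * V) ᵥ* (Wᵀ * K σ π * V)⁻¹ = d := by
    rw [hldCV, Matrix.vecMul_vecMul, Matrix.mul_nonsing_inv _ hKr, Matrix.vecMul_one]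
  -- the auxiliary functions
  set wvec : ℂ → Fin n → ℂ := fun s =>
    ldir ᵥ* (C s π * (K s π)⁻¹ - C s π * V * (Wᵀ * K s π * V)⁻¹ * Wᵀ) with hwvec
  set uvec : ℂ → Fin n → ℂ := fun s =>
    ((K s π)⁻¹ * B s π - V * ((Wᵀ * K s π * V)⁻¹ * (Wᵀ * B s π))) *ᵥ rdir with huvec
  set qfun : ℂ → ℂ := fun s => wvec s ⬝ᵥ (K s π *ᵥ uvec s) with hqfun
  have hw0 : wvec σ = 0 := by
    rw [hwvec]
    simp only [Matrix.vecMul_sub]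
    rw [hld, ← Matrix.vecMul_vecMul, ← Matrix.vecMul_vecMul, hldM, sub_self]
  have hu0 : uvec σ = 0 := by
    rw [huvec]
    simp only [Matrix.sub_mulVec]
    rw [← Matrix.mulVec_mulVec, ← hc, ← Matrix.mulVec_mulVec, ← Matrix.mulVec_mulVec,
      hcval, sub_self]
  have hwdiff : ∀ i, DifferentiableAt ℂ (fun s => wvec s i) σ := by
    intro i
    rw [hwvec]
    simp only [Matrix.vecMul, dotProduct]
    refine DifferentiableAt.fun_sum fun a _ => DifferentiableAt.const_mul ?_ _
    simp only [Matrix.sub_apply]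
    exact (diffAt_mul_entry hCdiff hKinv a i).sub
      (diffAt_mul_entry (diffAt_mul_entry (diffAt_mul_entry hCdiff (hconst V)) hMinv)
        (hconst Wᵀ) a i)
  have hudiff : ∀ j, DifferentiableAt ℂ (fun s => uvec s j) σ := by
    intro j
    rw [huvec]
    simp only [Matrix.mulVec, dotProduct]
    refine DifferentiableAt.fun_sum fun b _ => DifferentiableAt.mul ?_ (differentiableAt_const _)
    simp only [Matrix.sub_apply]
    exact (diffAt_mul_entry hKinv hBdiff j b).sub
      (diffAt_mul_entry (hconst V)
        (diffAt_mul_entry hMinv (diffAt_mul_entry (hconst Wᵀ) hBdiff)) j b)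
  have hq : HasDerivAt qfun 0 σ := by
    have hrepr : qfun = fun s => ∑ i : Fin n, wvec s i * ∑ j : Fin n, K s π i j * uvec s j := by
      funext s
      rw [hqfun]
      simp only [dotProduct, Matrix.mulVec]
    rw [hrepr]
    have : HasDerivAt (fun s => ∑ i : Fin n, wvec s i * ∑ j : Fin n, K s π i j * uvec s j)
        (∑ _i : Fin n, (0 : ℂ)) σ := by
      refine HasDerivAt.fun_sum fun i _ => ?_
      have hS : HasDerivAt (fun s => ∑ j : Fin n, K s π i j * uvec s j)
          (∑ j : Fin n, (deriv (fun s => K s π i j) σ * uvec σ j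
            + K σ π i j * deriv (fun s => uvec s j) σ)) σ :=
        HasDerivAt.fun_sum fun j _ => (hKdiff i j).hasDerivAt.mul (hudiff j).hasDerivAt
      have hmul := ((hwdiff i).hasDerivAt.fun_mul hS)
      have hz : wvec σ i = 0 := by rw [hw0]; rfl
      have hz' : ∀ j, uvec σ j = 0 := fun j => by rw [hu0]; rfl
      simpa [hz, hz'] using hmul
    simpa using this
  -- eventual equality
  have hdK : ∀ᶠ s in nhds σ, (K s π).det ≠ 0 :=
    (diffAt_det hKdiff).continuousAt.eventually_ne hKdet
  have hdM : ∀ᶠ s in nhds σ, (Wᵀ * K s π * V).det ≠ 0 :=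
    (diffAt_det hMe).continuousAt.eventually_ne hMdet
  have heq : (fun s : ℂ => ldir ⬝ᵥ ((C s π * (K s π)⁻¹ * B s π) *ᵥ rdir)) =ᶠ[nhds σ]
      (fun s : ℂ =>
        ldir ⬝ᵥ (((C s π * V) * (Wᵀ * K s π * V)⁻¹ * (Wᵀ * B s π)) *ᵥ rdir) + qfun s) := by
    filter_upwards [hdK, hdM] with s h1 h2
    have hKs : IsUnit (K s π).det := isUnit_iff_ne_zero.mpr h1
    have hMs : IsUnit (Wᵀ * K s π * V).det := isUnit_iff_ne_zero.mpr h2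
    have c1 : ∀ (X : Matrix (Fin n) (Fin m) ℂ), (K s π)⁻¹ * (K s π * X) = X := fun X =>
      Matrix.nonsing_inv_mul_cancel_left _ X hKs
    have c2 : ∀ (X : Matrix (Fin n) (Fin m) ℂ), K s π * ((K s π)⁻¹ * X) = X := fun X =>
      Matrix.mul_nonsing_inv_cancel_left _ X hKs
    have c3 : ∀ (X : Matrix (Fin r) (Fin m) ℂ),
        (Wᵀ * (K s π * V))⁻¹ * (Wᵀ * (K s π * (V * X))) = X := fun X => by
      rw [show Wᵀ * (K s π * (V * X)) = (Wᵀ * K s π * V) * X by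
          simp only [Matrix.mul_assoc],
        show Wᵀ * (K s π * V) = Wᵀ * K s π * V by rw [Matrix.mul_assoc]]
      exact Matrix.nonsing_inv_mul_cancel_left _ X hMs
    have key : (C s π * (K s π)⁻¹ - C s π * V * (Wᵀ * K s π * V)⁻¹ * Wᵀ)
          * (K s π * ((K s π)⁻¹ * B s π - V * ((Wᵀ * K s π * V)⁻¹ * (Wᵀ * B s π))))
        = C s π * (K s π)⁻¹ * B s π
          - (C s π * V) * (Wᵀ * K s π * V)⁻¹ * (Wᵀ * B s π) := by
      simp only [Matrix.mul_sub, Matrix.sub_mul, Matrix.mul_assoc, c1, c2, c3]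
      abel
    have hqs : qfun s = ldir ⬝ᵥ ((C s π * (K s π)⁻¹ * B s π
        - (C s π * V) * (Wᵀ * K s π * V)⁻¹ * (Wᵀ * B s π)) *ᵥ rdir) := by
      rw [hqfun, hwvec, huvec]
      show (ldir ᵥ* _) ⬝ᵥ (K s π *ᵥ (_ *ᵥ rdir)) = _
      rw [Matrix.mulVec_mulVec, Matrix.dotProduct_mulVec, Matrix.vecMul_vecMul, key,
        ← Matrix.dotProduct_mulVec]
    rw [hqs, Matrix.sub_mulVec, dotProduct_sub]
    ring
  have hgdiff : DifferentiableAt ℂ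
      (fun s : ℂ => ldir ⬝ᵥ (((C s π * V) * (Wᵀ * K s π * V)⁻¹ * (Wᵀ * B s π)) *ᵥ rdir)) σ :=
    diffAt_scalar
      (diffAt_mul_entry (diffAt_mul_entry (diffAt_mul_entry hCdiff (hconst V)) hMinv)
        (diffAt_mul_entry (hconst Wᵀ) hBdiff)) ldir rdir
  calc deriv (fun s : ℂ => ldir ⬝ᵥ ((C s π * (K s π)⁻¹ * B s π) *ᵥ rdir)) σ
      = deriv (fun s : ℂ =>
          ldir ⬝ᵥ (((C s π * V) * (Wᵀ * K s π * V)⁻¹ * (Wᵀ * B s π)) *ᵥ rdir) + qfun s) σ :=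
        heq.deriv_eq
    _ = deriv (fun s : ℂ =>
          ldir ⬝ᵥ (((C s π * V) * (Wᵀ * K s π * V)⁻¹ * (Wᵀ * B s π)) *ᵥ rdir)) σ := by
        rw [deriv_fun_add hgdiff hq.differentiableAt, hq.deriv, add_zero]
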